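/- Let α > −1/2 and fix n ∈ ℕ and x ∈ ℝ. Then lim_{b→∞} b^{−n/2}·Ŝ_n(√b·x; α+1/2, b) = H_n(x;α), where the limit is over real b → +∞, Ŝ_n are the symmetric Bannai–Ito polynomials and H_n(x;α) are the generalized Hermite polynomials. -/

import Mathlib

open Polynomial Finset Complex Filter

/-- The Pochhammer symbol `(a)ₖ = a(a+1)⋯(a+k-1)` for complex `a`. -/
noncomputable def pochC (a : ℂ) (k : ℕ) : ℂ := (ascPochhammer ℂ k).eval a

/-- The Pochhammer symbol `(a)ₖ = a(a+1)⋯(a+k-1)` for real `a`. -/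
noncomputable def pochR (a : ℝ) (k : ℕ) : ℝ := (ascPochhammer ℝ k).eval a

/-- The symmetric Bannai–Ito polynomials `Ŝₙ(x;a,b)`, given by their
continuous-dual-Hahn-type terminating ₃F₂ hypergeometric expressions. -/
noncomputable def symBI (a b : ℂ) (n : ℕ) : Polynomial ℂ :=
  let m : ℕ := n / 2
  if Even n then
    C ((-1 : ℂ) ^ m * pochC a m * pochC b m) *
      ∑ k ∈ range (m + 1),
        C (pochC (-(m : ℂ)) k / (pochC a k * pochC b k * (k.factorial : ℂ))) *
          ∏ j ∈ range k, (C ((j : ℂ) ^ 2) + X ^ 2)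
  else
    C ((-1 : ℂ) ^ m * pochC (1 + a) m * pochC (1 + b) m) * X *
      ∑ k ∈ range (m + 1),
        C (pochC (-(m : ℂ)) k / (pochC (1 + a) k * pochC (1 + b) k * (k.factorial : ℂ))) *
          ∏ j ∈ Icc 1 k, (C ((j : ℂ) ^ 2) + X ^ 2)

/-- The generalized Hermite polynomials `Hₙ(x;α)`. -/
noncomputable def genHermite (α : ℝ) (n : ℕ) : Polynomial ℝ :=
  let m : ℕ := n / 2
  if Even n then
    C ((-1 : ℝ) ^ m * pochR (α + 1 / 2) m) *
      ∑ k ∈ range (m + 1),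
        C (pochR (-(m : ℝ)) k / (pochR (α + 1 / 2) k * (k.factorial : ℝ))) * X ^ (2 * k)
  else
    C ((-1 : ℝ) ^ m * pochR (α + 3 / 2) m) * X *
      ∑ k ∈ range (m + 1),
        C (pochR (-(m : ℝ)) k / (pochR (α + 3 / 2) k * (k.factorial : ℝ))) * X ^ (2 * k)

lemma pochC_eq_prod (a : ℂ) (k : ℕ) : pochC a k = ∏ i ∈ range k, (a + i) := by
  induction k with
  | zero => simp [pochC]
  | succ k ih =>
    rw [pochC, ascPochhammer_succ_right, eval_mul, ← pochC, ih, prod_range_succ]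
    simp

lemma pochR_eq_prod (a : ℝ) (k : ℕ) : pochR a k = ∏ i ∈ range k, (a + i) := by
  induction k with
  | zero => simp [pochR]
  | succ k ih =>
    rw [pochR, ascPochhammer_succ_right, eval_mul, ← pochR, ih, prod_range_succ]
    simp

lemma pochR_cast (a : ℝ) (k : ℕ) : ((pochR a k : ℝ) : ℂ) = pochC (a : ℂ) k := by
  rw [pochR_eq_prod, pochC_eq_prod]; push_cast; rfl

lemma tendsto_div_ofReal (c : ℂ) : Tendsto (fun b : ℝ => c / (b : ℂ)) atTop (nhds 0) := by
  have h1 : Tendsto (fun b : ℝ => ((b⁻¹ : ℝ) : ℂ)) atTop (nhds 0) := by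
    simpa [Function.comp_def] using (Complex.continuous_ofReal.tendsto 0).comp tendsto_inv_atTop_zero
  have := h1.const_mul c
  simpa [div_eq_mul_inv, Complex.ofReal_inv] using this

lemma tendsto_one_add (c : ℂ) : Tendsto (fun b : ℝ => 1 + c / (b : ℂ)) atTop (nhds 1) := by
  simpa using tendsto_const_nhds.add (tendsto_div_ofReal c)

lemma tendsto_factor (u v w : ℂ) :
    Tendsto (fun b : ℝ => (u + (b : ℂ) * w) / ((b : ℂ) + v)) atTop (nhds w) := by
  have hnum : Tendsto (fun b : ℝ => u / (b : ℂ) + w) atTop (nhds w) := by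
    simpa using (tendsto_div_ofReal u).add (tendsto_const_nhds (x := w))
  have h := hnum.div (tendsto_one_add v) one_ne_zero
  rw [div_one] at h
  apply h.congr'
  filter_upwards [eventually_gt_atTop (max ‖v‖ 0)] with b hb
  have hb0 : (b : ℂ) ≠ 0 := by
    simpa using ne_of_gt (lt_of_le_of_lt (le_max_right _ _) hb)
  have hbv : (b : ℂ) + v ≠ 0 := by
    intro h0
    have : ‖v‖ < b := lt_of_le_of_lt (le_max_left _ _) hb
    have hv : v = -(b : ℂ) := by linear_combination h0
    rw [hv] at this
    simp at this
    have hbpos : (0:ℝ) < b := lt_of_le_of_lt (le_max_right _ _) hb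
    rw [abs_of_pos hbpos] at this
    exact lt_irrefl _ this
  rw [Pi.div_apply]
  field_simp

lemma pochC_real_ne_zero {r : ℝ} (hr : 0 < r) (k : ℕ) : pochC (r : ℂ) k ≠ 0 := by
  rw [pochC_eq_prod]
  apply prod_ne_zero_iff.mpr
  intro i _
  have h : ((r + i : ℝ) : ℂ) ≠ 0 := Complex.ofReal_ne_zero.mpr (by positivity)
  push_cast at h
  exact h


private lemma aux_even (α : ℝ) (hα : α > -(1 / 2)) (m : ℕ) (x : ℝ) :
    Tendsto (fun b : ℝ =>
        (b : ℂ) ^ (-((m + m : ℕ) : ℂ) / 2) *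
          (symBI ((α : ℂ) + 1 / 2) (b : ℂ) (m + m)).eval ((Real.sqrt b * x : ℝ) : ℂ))
      atTop (nhds (((genHermite α (m + m)).eval x : ℝ) : ℂ)) := by
  have hev : Even (m + m) := ⟨m, rfl⟩
  have h2 : (m + m) / 2 = m := by omega
  have htarget : (((genHermite α (m + m)).eval x : ℝ) : ℂ) =
      ∑ k ∈ range (m + 1),
        ((-1 : ℂ) ^ m * pochC ((α : ℂ) + 1 / 2) m *
            (pochC (-(m : ℂ)) k / (pochC ((α : ℂ) + 1 / 2) k * (k.factorial : ℂ)))) *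
          (((x : ℂ) ^ 2) ^ k) := by
    simp only [genHermite, if_pos hev, h2, eval_mul, eval_C, eval_finset_sum, eval_pow, eval_X]
    push_cast [pochR_cast, mul_sum]
    apply Finset.sum_congr rfl
    intro k hk
    rw [pow_mul]
    ring
  rw [htarget]
  have key : Tendsto (fun b : ℝ =>
      ∑ k ∈ range (m + 1),
        ((-1 : ℂ) ^ m * pochC ((α : ℂ) + 1 / 2) m *
            (pochC (-(m : ℂ)) k / (pochC ((α : ℂ) + 1 / 2) k * (k.factorial : ℂ)))) *
          ((∏ i ∈ range m, (1 + (i : ℂ) / (b : ℂ))) *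
            ∏ j ∈ range k, (((j : ℂ) ^ 2 + (b : ℂ) * (x : ℂ) ^ 2) / ((b : ℂ) + (j : ℂ)))))
      atTop (nhds (∑ k ∈ range (m + 1),
        ((-1 : ℂ) ^ m * pochC ((α : ℂ) + 1 / 2) m *
            (pochC (-(m : ℂ)) k / (pochC ((α : ℂ) + 1 / 2) k * (k.factorial : ℂ)))) *
          (((x : ℂ) ^ 2) ^ k))) := by
    apply tendsto_finset_sum
    intro k hk
    have hp1 : Tendsto (fun b : ℝ => ∏ i ∈ range m, (1 + (i : ℂ) / (b : ℂ))) atTop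
        (nhds 1) := by
      have := tendsto_finset_prod (range m)
        (f := fun (i : ℕ) (b : ℝ) => 1 + (i : ℂ) / (b : ℂ))
        (fun i _ => tendsto_one_add (i : ℂ))
      simpa using this
    have hp2 : Tendsto (fun b : ℝ =>
        ∏ j ∈ range k, (((j : ℂ) ^ 2 + (b : ℂ) * (x : ℂ) ^ 2) / ((b : ℂ) + (j : ℂ)))) atTop
        (nhds (((x : ℂ) ^ 2) ^ k)) := by
      have := tendsto_finset_prod (range k)
        (f := fun (j : ℕ) (b : ℝ) => ((j : ℂ) ^ 2 + (b : ℂ) * (x : ℂ) ^ 2) / ((b : ℂ) + (j : ℂ)))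
        (fun j _ => tendsto_factor ((j : ℂ) ^ 2) (j : ℂ) ((x : ℂ) ^ 2))
      simpa [prod_const, card_range] using this
    have := tendsto_const_nhds (x := ((-1 : ℂ) ^ m * pochC ((α : ℂ) + 1 / 2) m *
            (pochC (-(m : ℂ)) k / (pochC ((α : ℂ) + 1 / 2) k * (k.factorial : ℂ)))))
        (f := atTop (α := ℝ)) |>.mul (hp1.mul hp2)
    simpa using this
  apply key.congr'
  filter_upwards [eventually_gt_atTop 0] with b hb
  have hb0 : (b : ℂ) ≠ 0 := Complex.ofReal_ne_zero.mpr (ne_of_gt hb)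
  have hcpow : (b : ℂ) ^ (-((m + m : ℕ) : ℂ) / 2) = ((b : ℂ) ^ m)⁻¹ := by
    have he : (-((m + m : ℕ) : ℂ) / 2) = ((-(m : ℤ) : ℤ) : ℂ) := by push_cast; ring
    rw [he, Complex.cpow_intCast, zpow_neg, zpow_natCast]
  have hc : ((Real.sqrt b * x : ℝ) : ℂ) ^ 2 = (b : ℂ) * (x : ℂ) ^ 2 := by
    rw [show ((Real.sqrt b * x : ℝ) : ℂ) = ((Real.sqrt b : ℝ) : ℂ) * (x : ℂ) from by push_cast; ring,
      mul_pow, ← Complex.ofReal_pow, Real.sq_sqrt hb.le]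
  simp only [symBI, if_pos hev, h2, eval_mul, eval_C, eval_finset_sum, eval_prod, eval_add,
    eval_pow, eval_X, hcpow, hc, mul_sum]
  apply Finset.sum_congr rfl
  intro k hk
  have hkm : k ≤ m := by simpa [Nat.lt_succ_iff] using hk
  have hbm : (b : ℂ) ^ m ≠ 0 := pow_ne_zero _ hb0
  have hpbk : pochC (b : ℂ) k ≠ 0 := pochC_real_ne_zero hb k
  have hpak : pochC ((α : ℂ) + 1 / 2) k ≠ 0 := by
    have : ((α : ℂ) + 1 / 2) = ((α + 1 / 2 : ℝ) : ℂ) := by push_cast; ring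
    rw [this]
    exact pochC_real_ne_zero (by linarith) k
  have hfac : ((k.factorial : ℂ)) ≠ 0 := Nat.cast_ne_zero.mpr k.factorial_ne_zero
  have hprod1 : ∏ i ∈ range m, (1 + (i : ℂ) / (b : ℂ)) = pochC (b : ℂ) m / (b : ℂ) ^ m := by
    rw [pochC_eq_prod, show ((b : ℂ)) ^ m = ∏ _i ∈ range m, (b : ℂ) from by
      rw [prod_const, card_range], ← prod_div_distrib]
    apply prod_congr rfl
    intro i _
    field_simp
  have hprod2 : ∏ j ∈ range k, (((j : ℂ) ^ 2 + (b : ℂ) * (x : ℂ) ^ 2) / ((b : ℂ) + (j : ℂ))) =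
      (∏ j ∈ range k, ((j : ℂ) ^ 2 + (b : ℂ) * (x : ℂ) ^ 2)) / pochC (b : ℂ) k := by
    rw [pochC_eq_prod, prod_div_distrib]
  rw [hprod1, hprod2]
  field_simp

private lemma aux_odd (α : ℝ) (hα : α > -(1 / 2)) (m : ℕ) (x : ℝ) :
    Tendsto (fun b : ℝ =>
        (b : ℂ) ^ (-((m + m + 1 : ℕ) : ℂ) / 2) *
          (symBI ((α : ℂ) + 1 / 2) (b : ℂ) (m + m + 1)).eval ((Real.sqrt b * x : ℝ) : ℂ))
      atTop (nhds (((genHermite α (m + m + 1)).eval x : ℝ) : ℂ)) := by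
  have hev : ¬ Even (m + m + 1) := by rw [Nat.even_iff]; omega
  have h2 : (m + m + 1) / 2 = m := by omega
  have harg : (1 + ((α : ℂ) + 1 / 2)) = ((α + 3 / 2 : ℝ) : ℂ) := by push_cast; ring
  have htarget : (((genHermite α (m + m + 1)).eval x : ℝ) : ℂ) =
      ∑ k ∈ range (m + 1),
        ((-1 : ℂ) ^ m * pochC (1 + ((α : ℂ) + 1 / 2)) m *
            (pochC (-(m : ℂ)) k / (pochC (1 + ((α : ℂ) + 1 / 2)) k * (k.factorial : ℂ)))) *
          ((x : ℂ) * ((x : ℂ) ^ 2) ^ k) := by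
    simp only [genHermite, if_neg hev, h2, eval_mul, eval_C, eval_finset_sum, eval_pow, eval_X,
      harg]
    push_cast [pochR_cast, mul_sum]
    apply Finset.sum_congr rfl
    intro k hk
    rw [pow_mul]
    ring
  rw [htarget]
  have key : Tendsto (fun b : ℝ =>
      ∑ k ∈ range (m + 1),
        ((-1 : ℂ) ^ m * pochC (1 + ((α : ℂ) + 1 / 2)) m *
            (pochC (-(m : ℂ)) k / (pochC (1 + ((α : ℂ) + 1 / 2)) k * (k.factorial : ℂ)))) *
          ((x : ℂ) * ((∏ i ∈ range m, (1 + ((1 : ℂ) + (i : ℂ)) / (b : ℂ))) *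
            ∏ i ∈ range k, ((((1 : ℂ) + (i : ℂ)) ^ 2 + (b : ℂ) * (x : ℂ) ^ 2) /
              ((b : ℂ) + ((1 : ℂ) + (i : ℂ))))))) atTop
      (nhds (∑ k ∈ range (m + 1),
        ((-1 : ℂ) ^ m * pochC (1 + ((α : ℂ) + 1 / 2)) m *
            (pochC (-(m : ℂ)) k / (pochC (1 + ((α : ℂ) + 1 / 2)) k * (k.factorial : ℂ)))) *
          ((x : ℂ) * ((x : ℂ) ^ 2) ^ k))) := by
    apply tendsto_finset_sum
    intro k hk
    have hp1 : Tendsto (fun b : ℝ => ∏ i ∈ range m, (1 + ((1 : ℂ) + (i : ℂ)) / (b : ℂ))) atTop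
        (nhds 1) := by
      have := tendsto_finset_prod (range m)
        (f := fun (i : ℕ) (b : ℝ) => 1 + ((1 : ℂ) + (i : ℂ)) / (b : ℂ))
        (fun i _ => tendsto_one_add ((1 : ℂ) + (i : ℂ)))
      simpa using this
    have hp2 : Tendsto (fun b : ℝ =>
        ∏ i ∈ range k, ((((1 : ℂ) + (i : ℂ)) ^ 2 + (b : ℂ) * (x : ℂ) ^ 2) /
          ((b : ℂ) + ((1 : ℂ) + (i : ℂ))))) atTop (nhds (((x : ℂ) ^ 2) ^ k)) := by
      have := tendsto_finset_prod (range k)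
        (f := fun (i : ℕ) (b : ℝ) => (((1 : ℂ) + (i : ℂ)) ^ 2 + (b : ℂ) * (x : ℂ) ^ 2) /
          ((b : ℂ) + ((1 : ℂ) + (i : ℂ))))
        (fun i _ => tendsto_factor (((1 : ℂ) + (i : ℂ)) ^ 2) ((1 : ℂ) + (i : ℂ)) ((x : ℂ) ^ 2))
      simpa [prod_const, card_range] using this
    have := tendsto_const_nhds (x := ((-1 : ℂ) ^ m * pochC (1 + ((α : ℂ) + 1 / 2)) m *
            (pochC (-(m : ℂ)) k / (pochC (1 + ((α : ℂ) + 1 / 2)) k * (k.factorial : ℂ)))))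
        (f := atTop (α := ℝ)) |>.mul (tendsto_const_nhds (x := (x : ℂ)) |>.mul (hp1.mul hp2))
    simpa using this
  apply key.congr'
  filter_upwards [eventually_gt_atTop 0] with b hb
  have hb0 : (b : ℂ) ≠ 0 := Complex.ofReal_ne_zero.mpr (ne_of_gt hb)
  have hcval : ((Real.sqrt b * x : ℝ) : ℂ) = ((Real.sqrt b : ℝ) : ℂ) * (x : ℂ) := by push_cast; ring
  have hcp : (b : ℂ) ^ (-((m + m + 1 : ℕ) : ℂ) / 2) * ((Real.sqrt b : ℝ) : ℂ) =
      ((b : ℂ) ^ m)⁻¹ := by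
    have h1 : ((Real.sqrt b : ℝ) : ℂ) = (b : ℂ) ^ ((1 / 2 : ℝ) : ℂ) := by
      rw [Real.sqrt_eq_rpow, Complex.ofReal_cpow hb.le]
    rw [h1, ← Complex.cpow_add _ _ hb0,
      show (-((m + m + 1 : ℕ) : ℂ) / 2 + ((1 / 2 : ℝ) : ℂ)) = ((-(m : ℤ) : ℤ) : ℂ) by
        push_cast; ring,
      Complex.cpow_intCast, zpow_neg, zpow_natCast]
  have hc : ((Real.sqrt b * x : ℝ) : ℂ) ^ 2 = (b : ℂ) * (x : ℂ) ^ 2 := by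
    rw [hcval, mul_pow, ← Complex.ofReal_pow, Real.sq_sqrt hb.le]
  have hre : ∀ C1 S : ℂ, (b : ℂ) ^ (-((m + m + 1 : ℕ) : ℂ) / 2) *
      (C1 * ((Real.sqrt b * x : ℝ) : ℂ) * S) = ((b : ℂ) ^ m)⁻¹ * (C1 * (x : ℂ) * S) := by
    intro C1 S
    rw [hcval, ← hcp]
    ring
  simp only [symBI, if_neg hev, h2, eval_mul, eval_C, eval_finset_sum, eval_prod, eval_add,
    eval_pow, eval_X, hc]
  rw [hre, Finset.mul_sum, Finset.mul_sum]
  apply Finset.sum_congr rfl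
  intro k hk
  have hbm : (b : ℂ) ^ m ≠ 0 := pow_ne_zero _ hb0
  have hpbk : pochC (1 + (b : ℂ)) k ≠ 0 := by
    rw [show (1 + (b : ℂ)) = ((1 + b : ℝ) : ℂ) from by push_cast; ring]
    exact pochC_real_ne_zero (by linarith) k
  have hpak : pochC (1 + ((α : ℂ) + 1 / 2)) k ≠ 0 := by
    rw [harg]
    exact pochC_real_ne_zero (by linarith) k
  have hfac : ((k.factorial : ℂ)) ≠ 0 := Nat.cast_ne_zero.mpr k.factorial_ne_zero
  have hprod1 : ∏ i ∈ range m, (1 + ((1 : ℂ) + (i : ℂ)) / (b : ℂ)) =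
      pochC (1 + (b : ℂ)) m / (b : ℂ) ^ m := by
    rw [pochC_eq_prod, show ((b : ℂ)) ^ m = ∏ _i ∈ range m, (b : ℂ) from by
      rw [prod_const, card_range], ← prod_div_distrib]
    apply prod_congr rfl
    intro i _
    field_simp
    ring
  have hprod2 : ∏ i ∈ range k, ((((1 : ℂ) + (i : ℂ)) ^ 2 + (b : ℂ) * (x : ℂ) ^ 2) /
      ((b : ℂ) + ((1 : ℂ) + (i : ℂ)))) =
      (∏ i ∈ range k, (((1 : ℂ) + (i : ℂ)) ^ 2 + (b : ℂ) * (x : ℂ) ^ 2)) /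
        pochC (1 + (b : ℂ)) k := by
    rw [prod_div_distrib, show (∏ i ∈ range k, ((b : ℂ) + ((1 : ℂ) + (i : ℂ)))) =
      pochC (1 + (b : ℂ)) k from by rw [pochC_eq_prod]; exact prod_congr rfl fun i _ => by ring]
  have hIcc : ∏ j ∈ Icc 1 k, ((j : ℂ) ^ 2 + (b : ℂ) * (x : ℂ) ^ 2) =
      ∏ i ∈ range k, (((1 : ℂ) + (i : ℂ)) ^ 2 + (b : ℂ) * (x : ℂ) ^ 2) := by
    rw [← Finset.Ico_add_one_right_eq_Icc, prod_Ico_eq_prod_range]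
    exact prod_congr (by norm_num) fun i _ => by push_cast; ring
  rw [hprod1, hprod2, hIcc]
  field_simp

/-- the `b → ∞` limit `b^{-n/2} Ŝₙ(√b·x; α+1/2, b) → Hₙ(x;α)` of the
symmetric Bannai–Ito polynomials yields the generalized Hermite polynomials. -/
theorem symBannaiIto_to_genHermite_limit (α : ℝ) (hα : α > -(1 / 2)) (n : ℕ) (x : ℝ) :
    Tendsto (fun b : ℝ =>
        (b : ℂ) ^ (-(n : ℂ) / 2) *
          (symBI ((α : ℂ) + 1 / 2) (b : ℂ) n).eval ((Real.sqrt b * x : ℝ) : ℂ))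
      atTop (nhds (((genHermite α n).eval x : ℝ) : ℂ)) := by
  rcases Nat.even_or_odd n with he | ho
  · obtain ⟨m, rfl⟩ := he
    exact aux_even α hα m x
  · obtain ⟨m, rfl⟩ := ho
    have h := aux_odd α hα m x
    rw [show m + m + 1 = 2 * m + 1 from by ring] at h
    exact h
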